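/- Let Q_x ⊆ ℝ^n be convex, Q_y ⊆ ℝ^m be convex and compact, ν ∈ [0,1], L_xy > 0, μ_y > 0. Let f : Q_x × Q_y → ℝ be differentiable, with ‖∇_x f(x,y) - ∇_x f(x,y')‖₂ ≤ L_xy‖y - y'‖₂^ν for all x ∈ Q_x, y, y' ∈ Q_y, and with f(x,·) μ_y-strongly concave on Q_y for every x ∈ Q_x. Let y*(x) denote the unique maximizer of f(x,·) over Q_y. Then for all x₁, x₂ ∈ Q_x: ‖y*(x₁) - y*(x₂)‖₂ ≤ (2L_xy/μ_y)^{1/(2-ν)} ‖x₁ - x₂‖₂^{1/(2-ν)}, i.e., x ↦ y*(x) is Hölder continuous with constant (2L_xy/μ_y)^{1/(2-ν)} and exponent 1/(2-ν). -/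

import Mathlib

open scoped RealInnerProductSpace Topology
open InnerProductSpace Set

section aux
variable {E : Type*} [NormedAddCommGroup E] [InnerProductSpace ℝ E] [CompleteSpace E]

lemma curve_hasDerivAt {F : E → ℝ} {G : E} {p d : E} {t : ℝ}
    (h : HasGradientAt F G (p + t • d)) :
    HasDerivAt (fun s : ℝ => F (p + s • d)) ⟪G, d⟫ t := by
  have hc : HasDerivAt (fun s : ℝ => p + s • d) d t := by
    simpa using ((hasDerivAt_id t).smul_const d).const_add p
  have := (hasGradientAt_iff_hasFDerivAt.mp h).comp_hasDerivAt t hc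
  simpa [InnerProductSpace.toDual_apply_apply, Function.comp_def] using this

lemma grad_nonpos_at_max {F : E → ℝ} {g : E → E} {Q : Set E} (hQ : Convex ℝ Q)
    (hd : ∀ y ∈ Q, HasGradientAt F (g y) y)
    {y₀ : E} (hy₀ : y₀ ∈ Q) (hmax : ∀ y ∈ Q, F y ≤ F y₀)
    {y : E} (hy : y ∈ Q) : ⟪g y₀, y - y₀⟫ ≤ 0 := by
  set d := y - y₀ with hd'
  have hder : HasDerivAt (fun s : ℝ => F (y₀ + s • d)) ⟪g y₀, d⟫ 0 := by
    have := curve_hasDerivAt (p := y₀) (d := d) (t := 0)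
      (by simpa using hd y₀ hy₀)
    simpa using this
  have hslope := hasDerivAt_iff_tendsto_slope.mp hder
  have hsub : (𝓝[>] (0:ℝ)) ≤ 𝓝[≠] (0:ℝ) :=
    nhdsWithin_mono _ (fun t ht => ne_of_gt ht)
  refine le_of_tendsto (hslope.mono_left hsub) ?_
  filter_upwards [Ioc_mem_nhdsGT_of_mem (Set.left_mem_Ico.mpr one_pos)] with t ht
  have hmem : y₀ + t • d ∈ Q := by
    have h1 : (1 - t) • y₀ + t • y ∈ Q :=
      hQ hy₀ hy (by linarith [ht.2]) ht.1.le (by ring)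
    have h2 : y₀ + t • d = (1 - t) • y₀ + t • y := by rw [hd']; module
    rwa [h2]
  have hle : F (y₀ + t • d) ≤ F y₀ := hmax _ hmem
  rw [slope_def_field]
  simp only [sub_zero]
  exact div_nonpos_of_nonpos_of_nonneg (by simpa using sub_nonpos.mpr hle) ht.1.le

end aux

section aux2
variable {E : Type*} [NormedAddCommGroup E] [InnerProductSpace ℝ E] [CompleteSpace E]

lemma strong_concave_gap {F : E → ℝ} {g : E → E} {Q : Set E} (hQ : Convex ℝ Q)
    {μ : ℝ} (hμ : 0 < μ)
    (hd : ∀ y ∈ Q, HasGradientAt F (g y) y)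
    (hconc : ∀ y₁ ∈ Q, ∀ y₂ ∈ Q, ⟪g y₂ - g y₁, y₁ - y₂⟫ ≥ μ * ‖y₁ - y₂‖ ^ 2)
    {y₀ : E} (hy₀ : y₀ ∈ Q) (hmax : ∀ y ∈ Q, F y ≤ F y₀)
    {y : E} (hy : y ∈ Q) : F y ≤ F y₀ - μ / 4 * ‖y - y₀‖ ^ 2 := by
  set d := y - y₀ with hd'
  set yt : ℝ → E := fun t => y₀ + t • d with hyt
  have hmem : ∀ t ∈ Icc (0:ℝ) 1, yt t ∈ Q := by
    intro t ht
    have h1 : (1 - t) • y₀ + t • y ∈ Q :=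
      hQ hy₀ hy (by linarith [ht.2]) ht.1 (by ring)
    have h2 : yt t = (1 - t) • y₀ + t • y := by rw [hyt, hd']; module
    rwa [h2]
  have hder : ∀ t ∈ Icc (0:ℝ) 1,
      HasDerivAt (fun s : ℝ => F (yt s)) ⟪g (yt t), d⟫ t := fun t ht =>
    curve_hasDerivAt (hd _ (hmem t ht))
  obtain ⟨c, hc, hceq⟩ := exists_hasDerivAt_eq_slope (fun s : ℝ => F (yt s))
    (fun t => ⟪g (yt t), d⟫) (by norm_num : (1/2:ℝ) < 1)
    (fun t ht => (hder t ⟨by linarith [ht.1], ht.2⟩).continuousAt.continuousWithinAt)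
    (fun t ht => hder t ⟨by linarith [ht.1], ht.2.le⟩)
  have hc0 : (0:ℝ) < c := by linarith [hc.1]
  have hcQ : yt c ∈ Q := hmem c ⟨hc0.le, hc.2.le⟩
  -- strong concavity between yt c and y₀
  have hsc := hconc (yt c) hcQ y₀ hy₀
  have hytc : yt c - y₀ = c • d := by rw [hyt]; module
  rw [hytc] at hsc
  have hnorm : ‖c • d‖ ^ 2 = c ^ 2 * ‖d‖ ^ 2 := by
    rw [norm_smul, mul_pow, Real.norm_eq_abs, sq_abs]
  rw [hnorm, real_inner_smul_right] at hsc
  -- variational inequality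
  have hVI : ⟪g y₀, d⟫ ≤ 0 := grad_nonpos_at_max hQ hd hy₀ hmax hy
  have hinner : ⟪g y₀ - g (yt c), d⟫ = ⟪g y₀, d⟫ - ⟪g (yt c), d⟫ := by
    rw [inner_sub_left]
  rw [hinner] at hsc
  have hgc : ⟪g (yt c), d⟫ ≤ -(μ / 2) * ‖d‖ ^ 2 := by
    have h1 : μ * c * ‖d‖ ^ 2 ≤ ⟪g y₀, d⟫ - ⟪g (yt c), d⟫ := by
      refine le_of_mul_le_mul_left ?_ hc0
      calc c * (μ * c * ‖d‖ ^ 2) = μ * (c ^ 2 * ‖d‖ ^ 2) := by ring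
        _ ≤ c * (⟪g y₀, d⟫ - ⟪g (yt c), d⟫) := hsc
    have h2 : μ / 2 * ‖d‖ ^ 2 ≤ μ * c * ‖d‖ ^ 2 := by
      nlinarith [mul_nonneg hμ.le (sq_nonneg ‖d‖), hc.1]
    linarith
  -- mean value conclusion
  have hslope : ⟪g (yt c), d⟫ = (F (yt 1) - F (yt (1/2))) / (1 - 1/2) := hceq
  have hmid : F (yt (1/2)) ≤ F y₀ := hmax _ (hmem _ (by norm_num))
  have hy1 : yt 1 = y := by rw [hyt, hd']; module
  have : F (yt 1) - F (yt (1/2)) ≤ -(μ/4) * ‖d‖ ^ 2 := by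
    have h4 : (F (yt 1) - F (yt (1/2))) / (1 - 1/2) ≤ -(μ/2) * ‖d‖ ^ 2 :=
      hslope ▸ hgc
    rw [show (1 - 1/2 : ℝ) = 1/2 by norm_num,
      div_le_iff₀ (by norm_num : (0:ℝ) < 1/2)] at h4
    linarith
  rw [hy1] at this
  nlinarith [hmid]

end aux2


/-- Hölder continuity of `x ↦ y*(x)`, the maximizer of the `μ_y`-strongly
concave function `f(x,·)` over the convex compact set `Q_y`, when `∇ₓ f` is `ν`-Hölder
in `y` with constant `L_xy`:
`‖y*(x₁) - y*(x₂)‖ ≤ (2 L_xy / μ_y)^{1/(2-ν)} ‖x₁ - x₂‖^{1/(2-ν)}`. -/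
theorem stmt_2 {n m : ℕ}
    (Qx : Set (EuclideanSpace ℝ (Fin n))) (Qy : Set (EuclideanSpace ℝ (Fin m)))
    (hQx : Convex ℝ Qx) (hQy : Convex ℝ Qy) (hQyc : IsCompact Qy)
    (ν : ℝ) (hν : ν ∈ Set.Icc (0 : ℝ) 1)
    (Lxy μy : ℝ) (hLxy : 0 < Lxy) (hμy : 0 < μy)
    (f : EuclideanSpace ℝ (Fin n) → EuclideanSpace ℝ (Fin m) → ℝ)
    (fx : EuclideanSpace ℝ (Fin n) → EuclideanSpace ℝ (Fin m) → EuclideanSpace ℝ (Fin n))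
    (fy : EuclideanSpace ℝ (Fin n) → EuclideanSpace ℝ (Fin m) → EuclideanSpace ℝ (Fin m))
    (hdiffx : ∀ x ∈ Qx, ∀ y ∈ Qy, HasGradientAt (fun x' => f x' y) (fx x y) x)
    (hdiffy : ∀ x ∈ Qx, ∀ y ∈ Qy, HasGradientAt (fun y' => f x y') (fy x y) y)
    (hHolder : ∀ x ∈ Qx, ∀ y ∈ Qy, ∀ y' ∈ Qy,
      ‖fx x y - fx x y'‖ ≤ Lxy * ‖y - y'‖ ^ ν)
    -- `f(x,·)` is `μ_y`-strongly concave on `Q_y` for every `x ∈ Q_x`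
    (hconc : ∀ x ∈ Qx, ∀ y₁ ∈ Qy, ∀ y₂ ∈ Qy,
      ⟪fy x y₂ - fy x y₁, y₁ - y₂⟫ ≥ μy * ‖y₁ - y₂‖ ^ 2)
    -- `y*(x)` is the (unique) maximizer of `f(x,·)` over `Q_y`
    (ystar : EuclideanSpace ℝ (Fin n) → EuclideanSpace ℝ (Fin m))
    (hystar : ∀ x ∈ Qx, ystar x ∈ Qy ∧ ∀ y ∈ Qy, f x y ≤ f x (ystar x)) :
    ∀ x₁ ∈ Qx, ∀ x₂ ∈ Qx,
      ‖ystar x₁ - ystar x₂‖ ≤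
        (2 * Lxy / μy) ^ ((1 : ℝ) / (2 - ν)) * ‖x₁ - x₂‖ ^ ((1 : ℝ) / (2 - ν)) := by
  intro x₁ hx₁ x₂ hx₂
  obtain ⟨hy₁Q, hmax₁⟩ := hystar x₁ hx₁
  obtain ⟨hy₂Q, hmax₂⟩ := hystar x₂ hx₂
  set y₁ := ystar x₁
  set y₂ := ystar x₂
  set D := ‖y₁ - y₂‖ with hD
  have hDnn : 0 ≤ D := norm_nonneg _
  have h2ν : (0:ℝ) < 2 - ν := by linarith [hν.2]
  -- strong concavity gaps
  have gap1 : f x₁ y₂ ≤ f x₁ y₁ - μy / 4 * D ^ 2 := by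
    have := strong_concave_gap hQy hμy (fun y hy => hdiffy x₁ hx₁ y hy)
      (hconc x₁ hx₁) hy₁Q hmax₁ hy₂Q
    rwa [norm_sub_rev] at this
  have gap2 : f x₂ y₁ ≤ f x₂ y₂ - μy / 4 * D ^ 2 :=
    strong_concave_gap hQy hμy (fun y hy => hdiffy x₂ hx₂ y hy)
      (hconc x₂ hx₂) hy₂Q hmax₂ hy₁Q
  -- mean value inequality in x for g x = f x y₁ - f x y₂
  have hLip : ‖(f x₁ y₁ - f x₁ y₂) - (f x₂ y₁ - f x₂ y₂)‖ ≤
      Lxy * D ^ ν * ‖x₁ - x₂‖ := by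
    have hder : ∀ x ∈ Qx, HasFDerivWithinAt (fun x' => f x' y₁ - f x' y₂)
        (InnerProductSpace.toDual ℝ _ (fx x y₁) - InnerProductSpace.toDual ℝ _ (fx x y₂))
        Qx x := fun x hx =>
      (((hdiffx x hx y₁ hy₁Q).hasFDerivAt).sub ((hdiffx x hx y₂ hy₂Q).hasFDerivAt)).hasFDerivWithinAt
    have hbound : ∀ x ∈ Qx,
        ‖InnerProductSpace.toDual ℝ _ (fx x y₁) - InnerProductSpace.toDual ℝ _ (fx x y₂)‖ ≤
          Lxy * D ^ ν := by
      intro x hx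
      rw [← map_sub, LinearIsometryEquiv.norm_map]
      exact hHolder x hx y₁ hy₁Q y₂ hy₂Q
    exact hQx.norm_image_sub_le_of_norm_hasFDerivWithin_le hder hbound hx₂ hx₁
  have key : μy / 2 * D ^ 2 ≤ Lxy * D ^ ν * ‖x₁ - x₂‖ := by
    have h1 : (f x₁ y₁ - f x₁ y₂) - (f x₂ y₁ - f x₂ y₂) ≤ Lxy * D ^ ν * ‖x₁ - x₂‖ :=
      (le_abs_self _).trans (by simpa [Real.norm_eq_abs] using hLip)
    linarith [gap1, gap2]
  rcases eq_or_lt_of_le hDnn with hD0 | hDpos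
  · have hrhs : (0:ℝ) ≤ (2 * Lxy / μy) ^ ((1 : ℝ) / (2 - ν)) * ‖x₁ - x₂‖ ^ ((1 : ℝ) / (2 - ν)) := by
      positivity
    show D ≤ _
    linarith [hD0]
  -- D > 0
  have hD2 : D ^ (2:ℕ) = D ^ ν * D ^ (2 - ν) := by
    rw [← Real.rpow_add hDpos, ← Real.rpow_natCast D 2]; norm_num
  have hkey2 : D ^ (2 - ν) ≤ 2 * Lxy / μy * ‖x₁ - x₂‖ := by
    have hDν : (0:ℝ) < D ^ ν := Real.rpow_pos_of_pos hDpos ν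
    rw [div_mul_eq_mul_div, le_div_iff₀ hμy]
    have h2 : μy / 2 * (D ^ ν * D ^ (2 - ν)) ≤ Lxy * D ^ ν * ‖x₁ - x₂‖ := by
      rw [← hD2]; exact key
    nlinarith [hDν, Real.rpow_nonneg hDnn (2 - ν)]
  calc D = (D ^ (2 - ν)) ^ ((1:ℝ) / (2 - ν)) := by
        rw [← Real.rpow_mul hDnn, mul_one_div_cancel (ne_of_gt h2ν), Real.rpow_one]
    _ ≤ (2 * Lxy / μy * ‖x₁ - x₂‖) ^ ((1:ℝ) / (2 - ν)) := by
        apply Real.rpow_le_rpow (Real.rpow_nonneg hDnn _) hkey2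
        positivity
    _ = (2 * Lxy / μy) ^ ((1:ℝ) / (2 - ν)) * ‖x₁ - x₂‖ ^ ((1:ℝ) / (2 - ν)) := by
        rw [Real.mul_rpow (by positivity) (norm_nonneg _)]
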